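/- Under the identifications for p = 1: a bounded sequence α satisfies |∑ₖ α(k)x₁(k)⋯xₙ(k)| ≤ C·‖x₁‖⋯‖xₙ‖ for all x₁,…,xₙ in the dual d(w,1)* of the Lorentz space d(w,1) if and only if α belongs to d(wⁿ,1), i.e., ∑ₖ α*(k)·w(k)ⁿ < ∞, and the best constant C equals ‖α‖_{d(wⁿ,1)} = ∑ₖ α*(k)w(k)ⁿ. -/

import Mathlib

open Finset

/-- The decreasing rearrangement of (the moduli of) a bounded sequence:
`x*(k) = inf { sup_{j ∉ J} |x(j)| : |J| ≤ k }` (0-indexed). -/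
noncomputable def dRear (x : ℕ → ℂ) (k : ℕ) : ℝ :=
  sInf {s : ℝ | ∃ J : Finset ℕ, J.card ≤ k ∧ ∀ j ∉ J, ‖x j‖ ≤ s}

/-- Membership in `d(w,1)* = { x : sup_N (∑_{k<N} x*(k))/(∑_{k<N} w(k)) < ∞ }`, expressed via
finite subsets: `sup_{J finite} (∑_{k∈J} |x(k)|)/(∑_{k<|J|} w(k)) < ∞`. -/
def memDual (w : ℕ → ℝ) (x : ℕ → ℂ) : Prop :=
  BddAbove (Set.range fun J : Finset ℕ =>
    (∑ k ∈ J, ‖x k‖) / (∑ k ∈ Finset.range J.card, w k))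

/-- The norm of `d(w,1)*`. -/
noncomputable def nrmDual (w : ℕ → ℝ) (x : ℕ → ℂ) : ℝ :=
  ⨆ J : Finset ℕ, (∑ k ∈ J, ‖x k‖) / (∑ k ∈ Finset.range J.card, w k)

/-- Abel summation auxiliary. -/
lemma abel_aux (β b c : ℕ → ℝ) (hβa : Antitone β) (hβ0 : ∀ m, 0 ≤ β m) :
    ∀ N, (∀ M ≤ N, ∑ m ∈ range M, b m ≤ ∑ m ∈ range M, c m) →
      ∑ m ∈ range N, β m * b m
        + β N * ((∑ m ∈ range N, c m) - ∑ m ∈ range N, b m)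
        ≤ ∑ m ∈ range N, β m * c m := by
  intro N
  induction N with
  | zero => simp
  | succ N ih =>
    intro h
    have ih' := ih (fun M hM => h M (hM.trans (Nat.le_succ N)))
    have h1 := h (N + 1) le_rfl
    have h2 : β (N + 1) ≤ β N := hβa (Nat.le_succ N)
    have h3 := hβ0 (N + 1)
    rw [sum_range_succ, sum_range_succ (fun m => β m * c m), sum_range_succ b,
      sum_range_succ c] at *
    nlinarith [ih', h1, h2, h3]

lemma abel_le (β b c : ℕ → ℝ) (hβa : Antitone β) (hβ0 : ∀ m, 0 ≤ β m) (N : ℕ)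
    (h : ∀ M ≤ N, ∑ m ∈ range M, b m ≤ ∑ m ∈ range M, c m) :
    ∑ m ∈ range N, β m * b m ≤ ∑ m ∈ range N, β m * c m := by
  have h1 := abel_aux β b c hβa hβ0 N h
  have h2 := h N le_rfl
  nlinarith [hβ0 N]

/-- enumeration of a finset sorted decreasingly by `u`. -/
lemma exists_sorted_enum (J : Finset ℕ) (u : ℕ → ℝ) :
    ∃ e : ℕ → ℕ, Set.InjOn e (Set.Iio J.card) ∧
      (Finset.image e (range J.card) = J) ∧
      (∀ m1 m2, m1 ≤ m2 → m2 < J.card → u (e m2) ≤ u (e m1)) := by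
  set M := J.card with hM
  set g : Fin M ≃o {x // x ∈ J} := J.orderIsoOfFin rfl with hg
  set f : Fin M → ℝ := fun i => -u ((g i : ℕ)) with hf
  set σ := Tuple.sort f with hσ
  have hmono : Monotone (f ∘ σ) := Tuple.monotone_sort f
  refine ⟨fun m => if h : m < M then ((g (σ ⟨m, h⟩)) : ℕ) else 0, ?_, ?_, ?_⟩
  · intro m1 h1 m2 h2 heq
    simp only [Set.mem_Iio] at h1 h2
    simp only [dif_pos h1, dif_pos h2] at heq
    have : g (σ ⟨m1, h1⟩) = g (σ ⟨m2, h2⟩) := Subtype.ext heq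
    have := σ.injective (g.injective this)
    exact congrArg Fin.val this
  · apply Finset.eq_of_subset_of_card_le
    · intro x hx
      obtain ⟨m, hm, rfl⟩ := Finset.mem_image.mp hx
      rw [dif_pos (mem_range.mp hm)]
      exact (g (σ ⟨m, mem_range.mp hm⟩)).2
    · rw [Finset.card_image_of_injOn, Finset.card_range]
      intro m1 h1 m2 h2 heq
      simp only [coe_range, Set.mem_Iio] at h1 h2
      simp only [dif_pos h1, dif_pos h2] at heq
      have : g (σ ⟨m1, h1⟩) = g (σ ⟨m2, h2⟩) := Subtype.ext heq
      have := σ.injective (g.injective this)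
      exact congrArg Fin.val this
  · intro m1 m2 h12 h2
    have h1 : m1 < M := lt_of_le_of_lt h12 h2
    simp only [dif_pos h1, dif_pos h2]
    have := hmono (show (⟨m1, h1⟩ : Fin M) ≤ ⟨m2, h2⟩ from h12)
    simp only [Function.comp_apply, hf] at this
    linarith

/-- sum of an antitone nonneg sequence over any finset is at most the
initial-segment sum of the same length. -/
lemma sum_antitone_le {w : ℕ → ℝ} (hwa : Antitone w) (hw0 : ∀ k, 0 ≤ w k)
    (R : Finset ℕ) : ∑ m ∈ R, w m ≤ ∑ m ∈ range R.card, w m := by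
  obtain ⟨N, hN⟩ : ∃ N, R.card = N := ⟨_, rfl⟩
  induction N generalizing R with
  | zero => simp [Finset.card_eq_zero.mp hN]
  | succ N ih =>
    have hne : R.Nonempty := Finset.card_pos.mp (by omega)
    set M := R.max' hne with hM
    have hsub : R ⊆ range (M + 1) := fun x hx =>
      mem_range.mpr (Nat.lt_succ_of_le (R.le_max' x hx))
    have hcard : R.card ≤ M + 1 := by
      simpa using Finset.card_le_card hsub
    have hNM : N ≤ M := by omega
    have herase : (R.erase M).card = N := by
      rw [Finset.card_erase_of_mem (R.max'_mem hne)]; omega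
    have hval : w M ≤ w N := hwa hNM
    have := ih (R.erase M) herase
    have hsplit : ∑ m ∈ R, w m = ∑ m ∈ R.erase M, w m + w M := by
      rw [Finset.sum_erase_add R w (R.max'_mem hne)]
    rw [hsplit, hN, sum_range_succ]
    rw [herase] at this
    linarith

section dRearFacts

variable {α : ℕ → ℂ} {A : ℝ}

lemma dRear_set_nonempty (hA : ∀ k, ‖α k‖ ≤ A) (k : ℕ) :
    {s : ℝ | ∃ J : Finset ℕ, J.card ≤ k ∧ ∀ j ∉ J, ‖α j‖ ≤ s}.Nonempty :=
  ⟨A, ∅, by simp, fun j _ => hA j⟩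

lemma dRear_set_bddBelow (k : ℕ) :
    BddBelow {s : ℝ | ∃ J : Finset ℕ, J.card ≤ k ∧ ∀ j ∉ J, ‖α j‖ ≤ s} := by
  refine ⟨0, fun s hs => ?_⟩
  obtain ⟨J, _, hJ⟩ := hs
  obtain ⟨j, hj⟩ := J.exists_notMem
  exact le_trans (norm_nonneg _) (hJ j hj)

lemma dRear_nonneg (hA : ∀ k, ‖α k‖ ≤ A) (k : ℕ) : 0 ≤ dRear α k :=
  le_csInf (dRear_set_nonempty hA k) (fun s hs => by
    obtain ⟨J, _, hJ⟩ := hs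
    obtain ⟨j, hj⟩ := J.exists_notMem
    exact le_trans (norm_nonneg _) (hJ j hj))

lemma dRear_antitone (hA : ∀ k, ‖α k‖ ≤ A) : Antitone (dRear α) := by
  intro k l hkl
  exact csInf_le_csInf (dRear_set_bddBelow l)
    (dRear_set_nonempty hA k)
    (fun s hs => by obtain ⟨J, hJc, hJ⟩ := hs; exact ⟨J, hJc.trans hkl, hJ⟩)

/-- greedy step: outside any set of size ≤ m there is a point with
`‖α k‖ > dRear α m - ε`. -/
lemma dRear_greedy (J : Finset ℕ) {m : ℕ} (hJ : J.card ≤ m) {ε : ℝ} (hε : 0 < ε) :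
    ∃ k, k ∉ J ∧ dRear α m - ε < ‖α k‖ := by
  by_contra hcon
  push_neg at hcon
  have : dRear α m ≤ dRear α m - ε :=
    csInf_le (dRear_set_bddBelow m) ⟨J, hJ, fun j hj => hcon j hj⟩
  linarith

/-- if `e` enumerates distinct points with `‖α∘e‖` decreasing, then
`‖α (e m)‖ ≤ dRear α m`. -/
lemma sorted_le_dRear (hA : ∀ k, ‖α k‖ ≤ A) {e : ℕ → ℕ} {M : ℕ} (hinj : Set.InjOn e (Set.Iio M))
    (hsort : ∀ m1 m2, m1 ≤ m2 → m2 < M → ‖α (e m2)‖ ≤ ‖α (e m1)‖)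
    {m : ℕ} (hm : m < M) : ‖α (e m)‖ ≤ dRear α m := by
  have hne : {s : ℝ | ∃ J : Finset ℕ, J.card ≤ m ∧ ∀ j ∉ J, ‖α j‖ ≤ s}.Nonempty :=
    ⟨A, ∅, by simp, fun j _ => hA j⟩
  apply le_csInf hne
  rintro s ⟨J', hcard, hs⟩
  -- among e 0, ..., e m one is outside J'
  have hima : ∃ l, l ≤ m ∧ e l ∉ J' := by
    by_contra hcon
    push_neg at hcon
    have hsub : Finset.image e (range (m + 1)) ⊆ J' := by
      intro x hx
      obtain ⟨l, hl, rfl⟩ := Finset.mem_image.mp hx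
      exact hcon l (Nat.lt_succ_iff.mp (mem_range.mp hl))
    have hcardim : (Finset.image e (range (m + 1))).card = m + 1 := by
      rw [Finset.card_image_of_injOn, Finset.card_range]
      intro a ha b hb hab
      simp only [coe_range, Set.mem_Iio] at ha hb
      exact hinj (lt_of_lt_of_le ha (by omega) : a < M)
        (lt_of_lt_of_le hb (by omega) : b < M) hab
    have := Finset.card_le_card hsub
    omega
  obtain ⟨l, hl, hlJ⟩ := hima
  exact le_trans (hsort l m hl hm) (hs (e l) hlJ)

end dRearFacts

section dual

variable {w : ℕ → ℝ}

lemma ratio_le_nrmDual {x : ℕ → ℂ} (hx : memDual w x) (J : Finset ℕ) :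
    (∑ k ∈ J, ‖x k‖) / (∑ k ∈ range J.card, w k) ≤ nrmDual w x :=
  le_ciSup hx J

lemma nrmDual_nonneg {x : ℕ → ℂ} (hx : memDual w x) : 0 ≤ nrmDual w x := by
  have := ratio_le_nrmDual hx ∅
  simpa using this

lemma sum_le_nrmDual (hw : ∀ k, 0 < w k) {x : ℕ → ℂ} (hx : memDual w x) (J : Finset ℕ) :
    ∑ k ∈ J, ‖x k‖ ≤ nrmDual w x * ∑ m ∈ range J.card, w m := by
  rcases J.eq_empty_or_nonempty with rfl | hne
  · simp
  · have hpos : 0 < ∑ m ∈ range J.card, w m := by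
      apply Finset.sum_pos (fun m _ => hw m)
      exact nonempty_range_iff.mpr (Finset.card_pos.mpr hne).ne'
    have := ratio_le_nrmDual hx J
    rw [div_le_iff₀ hpos] at this
    linarith

lemma nrmDual_le_one (hw : ∀ k, 0 < w k) {x : ℕ → ℂ} 
    (h : ∀ J : Finset ℕ, ∑ k ∈ J, ‖x k‖ ≤ ∑ m ∈ range J.card, w m) :
    nrmDual w x ≤ 1 := by
  apply ciSup_le
  intro J
  rcases J.eq_empty_or_nonempty with rfl | hne
  · simp
  · have hpos : 0 < ∑ m ∈ range J.card, w m := by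
      apply Finset.sum_pos (fun m _ => hw m)
      exact nonempty_range_iff.mpr (Finset.card_pos.mpr hne).ne'
    rw [div_le_one hpos]
    exact h J

lemma memDual_of_le (hw : ∀ k, 0 < w k) {x : ℕ → ℂ}
    (h : ∀ J : Finset ℕ, ∑ k ∈ J, ‖x k‖ ≤ ∑ m ∈ range J.card, w m) :
    memDual w x := by
  refine ⟨1, fun r hr => ?_⟩
  obtain ⟨J, rfl⟩ := hr
  rcases J.eq_empty_or_nonempty with rfl | hne
  · simp
  · have hpos : 0 < ∑ m ∈ range J.card, w m := by
      apply Finset.sum_pos (fun m _ => hw m)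
      exact nonempty_range_iff.mpr (Finset.card_pos.mpr hne).ne'
    rw [div_le_one hpos]
    exact h J

end dual

/-- the two-function multiplicative bound. -/
lemma mul_bound {w : ℕ → ℝ} (hwa : Antitone w) (hw0 : ∀ k, 0 ≤ w k)
    (φ : ℕ → ℝ) (hφa : Antitone φ) (hφ0 : ∀ m, 0 ≤ φ m)
    (p q : ℕ → ℝ) (hp0 : ∀ k, 0 ≤ p k) (hq0 : ∀ k, 0 ≤ q k)
    (hp : ∀ J : Finset ℕ, ∑ k ∈ J, p k ≤ ∑ m ∈ range J.card, φ m)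
    (hq : ∀ J : Finset ℕ, ∑ k ∈ J, q k ≤ ∑ m ∈ range J.card, w m)
    (J : Finset ℕ) :
    ∑ k ∈ J, p k * q k ≤ ∑ m ∈ range J.card, φ m * w m := by
  obtain ⟨e, hinj, himg, hsort⟩ := exists_sorted_enum J p
  set M := J.card with hM
  set P : ℕ → ℝ := fun m => if m < M then p (e m) else 0 with hP
  set Q : ℕ → ℝ := fun m => if m < M then q (e m) else 0 with hQ
  have hinj' : ∀ M', M' ≤ M → ∀ a ∈ range M', ∀ b ∈ range M', e a = e b → a = b := by
    intro M' hM' a ha b hb hab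
    exact hinj (lt_of_lt_of_le (mem_range.mp ha) hM') (lt_of_lt_of_le (mem_range.mp hb) hM') hab
  -- key partial-sum facts
  have keyP : ∀ M' ≤ M, ∑ m ∈ range M', P m ≤ ∑ m ∈ range M', φ m := by
    intro M' hM'
    have h1 : ∑ m ∈ range M', P m = ∑ k ∈ Finset.image e (range M'), p k := by
      rw [Finset.sum_image (hinj' M' hM')]
      apply sum_congr rfl
      intro m hm
      simp [hP, lt_of_lt_of_le (mem_range.mp hm) hM']
    have h2 := hp (Finset.image e (range M'))
    rwa [Finset.card_image_of_injOn (fun a ha b hb hab => hinj' M' hM' a (by simpa using ha) b (by simpa using hb) hab), Finset.card_range, ← h1] at h2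
  have keyQ : ∀ M' ≤ M, ∑ m ∈ range M', Q m ≤ ∑ m ∈ range M', w m := by
    intro M' hM'
    have h1 : ∑ m ∈ range M', Q m = ∑ k ∈ Finset.image e (range M'), q k := by
      rw [Finset.sum_image (hinj' M' hM')]
      apply sum_congr rfl
      intro m hm
      simp [hQ, lt_of_lt_of_le (mem_range.mp hm) hM']
    have h2 := hq (Finset.image e (range M'))
    rwa [Finset.card_image_of_injOn (fun a ha b hb hab => hinj' M' hM' a (by simpa using ha) b (by simpa using hb) hab), Finset.card_range, ← h1] at h2
  have hPa : Antitone P := by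
    intro m1 m2 h12
    by_cases h2 : m2 < M
    · have h1 : m1 < M := lt_of_le_of_lt h12 h2
      simp only [hP, if_pos h1, if_pos h2]
      exact hsort m1 m2 h12 h2
    · simp only [hP, if_neg h2]
      by_cases h1 : m1 < M <;> simp [h1, hp0 _]
  have hP0 : ∀ m, 0 ≤ P m := by
    intro m; by_cases h : m < M <;> simp [hP, h, hp0 _]
  have hsum : ∑ k ∈ J, p k * q k = ∑ m ∈ range M, P m * Q m := by
    rw [← himg, Finset.sum_image (hinj' M le_rfl)]
    apply sum_congr rfl
    intro m hm
    simp [hP, hQ, mem_range.mp hm]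
  rw [hsum]
  calc ∑ m ∈ range M, P m * Q m ≤ ∑ m ∈ range M, P m * w m :=
        abel_le P Q w hPa hP0 M keyQ
    _ = ∑ m ∈ range M, w m * P m := by simp [mul_comm]
    _ ≤ ∑ m ∈ range M, w m * φ m := abel_le w P φ hwa hw0 M keyP
    _ = ∑ m ∈ range M, φ m * w m := by simp [mul_comm]

/-- the `n`-fold product bound. -/
lemma prod_bound {w : ℕ → ℝ} (hwa : Antitone w) (hw0 : ∀ k, 0 ≤ w k) :
    ∀ (n : ℕ) (y : Fin n → ℕ → ℝ), (∀ i k, 0 ≤ y i k) →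
    (∀ i (J : Finset ℕ), ∑ k ∈ J, y i k ≤ ∑ m ∈ range J.card, w m) →
    ∀ J : Finset ℕ, ∑ k ∈ J, ∏ i, y i k ≤ ∑ m ∈ range J.card, (w m) ^ n := by
  intro n
  induction n with
  | zero => intro y _ _ J; simp
  | succ n ih =>
    intro y hy0 hy J
    have hrec := ih (fun i => y i.succ) (fun i k => hy0 i.succ k) (fun i => hy i.succ)
    have hstep : ∑ k ∈ J, (∏ i : Fin n, y i.succ k) * y 0 k
        ≤ ∑ m ∈ range J.card, (w m) ^ n * w m := by
      apply mul_bound hwa hw0 (fun m => (w m) ^ n)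
        (fun m1 m2 h => pow_le_pow_left₀ (hw0 m2) (hwa h) n)
        (fun m => pow_nonneg (hw0 m) n)
        _ _ (fun k => Finset.prod_nonneg (fun i _ => hy0 i.succ k)) (hy0 0)
        hrec (hy 0)
    calc ∑ k ∈ J, ∏ i, y i k = ∑ k ∈ J, (∏ i : Fin n, y i.succ k) * y 0 k := by
          apply sum_congr rfl; intro k _; rw [Fin.prod_univ_succ]; ring
      _ ≤ ∑ m ∈ range J.card, (w m) ^ n * w m := hstep
      _ = ∑ m ∈ range J.card, (w m) ^ (n + 1) := by
          apply sum_congr rfl; intro m _; rw [pow_succ]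

/-- sufficiency core: the finite-sum bound. -/
lemma core_bound {w : ℕ → ℝ} (hw : ∀ k, 0 < w k) (hwa : Antitone w)
    {α : ℕ → ℂ} {A : ℝ} (hA : ∀ k, ‖α k‖ ≤ A) {n : ℕ}
    (hS : Summable (fun k => dRear α k * w k ^ n))
    (x : Fin n → ℕ → ℂ) (hx : ∀ i, memDual w (x i)) (F : Finset ℕ) :
    ∑ k ∈ F, ‖α k‖ * ∏ i, ‖x i k‖
      ≤ (∑' k, dRear α k * w k ^ n) * ∏ i, nrmDual w (x i) := by
  have hw0 : ∀ k, 0 ≤ w k := fun k => (hw k).le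
  set S := ∑' k, dRear α k * w k ^ n with hSdef
  have hS0 : 0 ≤ S := tsum_nonneg (fun k =>
    mul_nonneg (dRear_nonneg hA k) (pow_nonneg (hw0 k) n))
  by_cases hzero : ∃ i, nrmDual w (x i) = 0
  · obtain ⟨i0, hi0⟩ := hzero
    have hx0 : ∀ k, ‖x i0 k‖ = 0 := by
      intro k
      have h1 := sum_le_nrmDual hw (hx i0) {k}
      simp only [Finset.sum_singleton, Finset.card_singleton, hi0, zero_mul] at h1
      exact le_antisymm h1 (norm_nonneg _)
    have hL : ∑ k ∈ F, ‖α k‖ * ∏ i, ‖x i k‖ = 0 := by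
      apply Finset.sum_eq_zero
      intro k _
      rw [Finset.prod_eq_zero (Finset.mem_univ i0) (hx0 k), mul_zero]
    rw [hL, Finset.prod_eq_zero (Finset.mem_univ i0) hi0, mul_zero]
  · push_neg at hzero
    have hMpos : ∀ i, 0 < nrmDual w (x i) := fun i =>
      lt_of_le_of_ne (nrmDual_nonneg (hx i)) (Ne.symm (hzero i))
    set y : Fin n → ℕ → ℝ := fun i k => ‖x i k‖ / nrmDual w (x i) with hy
    have hy0 : ∀ i k, 0 ≤ y i k := fun i k => div_nonneg (norm_nonneg _) (hMpos i).le
    have hyb : ∀ i (J : Finset ℕ), ∑ k ∈ J, y i k ≤ ∑ m ∈ range J.card, w m := by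
      intro i J
      have h1 := sum_le_nrmDual hw (hx i) J
      rw [hy]
      rw [← Finset.sum_div, div_le_iff₀ (hMpos i)]
      linarith
    have hQ := prod_bound hwa hw0 n y hy0 hyb
    obtain ⟨e, hinj, himg, hsort⟩ := exists_sorted_enum F (fun k => ‖α k‖)
    set N := F.card with hN
    set b : ℕ → ℝ := fun m => if m < N then ∏ i, y i (e m) else 0 with hb
    have hb0 : ∀ m, 0 ≤ b m := by
      intro m
      by_cases h : m < N
      · simp only [hb, if_pos h]
        exact Finset.prod_nonneg (fun i _ => hy0 i _)
      · simp [hb, h]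
    have hinj' : ∀ M', M' ≤ N → ∀ a ∈ range M', ∀ c ∈ range M', e a = e c → a = c := by
      intro M' hM' a ha c hc hac
      exact hinj (lt_of_lt_of_le (mem_range.mp ha) hM')
        (lt_of_lt_of_le (mem_range.mp hc) hM') hac
    -- partial sums of b
    have keyb : ∀ M' ≤ N, ∑ m ∈ range M', b m ≤ ∑ m ∈ range M', (w m) ^ n := by
      intro M' hM'
      have h1 : ∑ m ∈ range M', b m = ∑ k ∈ Finset.image e (range M'), ∏ i, y i k := by
        rw [Finset.sum_image (hinj' M' hM')]
        apply sum_congr rfl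
        intro m hm
        simp [hb, lt_of_lt_of_le (mem_range.mp hm) hM']
      have h2 := hQ (Finset.image e (range M'))
      rwa [Finset.card_image_of_injOn
        (fun a ha c hc hac => hinj' M' hM' a (by simpa using ha) c (by simpa using hc) hac),
        Finset.card_range, ← h1] at h2
    -- main chain
    have hmain : ∑ k ∈ F, ‖α k‖ * ∏ i, y i k ≤ S := by
      have h1 : ∑ k ∈ F, ‖α k‖ * ∏ i, y i k
          = ∑ m ∈ range N, ‖α (e m)‖ * ∏ i, y i (e m) := by
        rw [← himg, Finset.sum_image (hinj' N le_rfl)]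
      have h2 : ∑ m ∈ range N, ‖α (e m)‖ * ∏ i, y i (e m)
          ≤ ∑ m ∈ range N, dRear α m * b m := by
        apply Finset.sum_le_sum
        intro m hm
        have hmN := mem_range.mp hm
        rw [hb]
        simp only [if_pos hmN]
        exact mul_le_mul_of_nonneg_right (sorted_le_dRear hA hinj hsort hmN)
          (Finset.prod_nonneg (fun i _ => hy0 i _))
      have h3 : ∑ m ∈ range N, dRear α m * b m
          ≤ ∑ m ∈ range N, dRear α m * (w m) ^ n :=
        abel_le (dRear α) b (fun m => (w m) ^ n) (dRear_antitone hA)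
          (dRear_nonneg hA) N keyb
      have h4 : ∑ m ∈ range N, dRear α m * (w m) ^ n ≤ S :=
        Summable.sum_le_tsum (range N)
          (fun k _ => mul_nonneg (dRear_nonneg hA k) (pow_nonneg (hw0 k) n)) hS
      linarith
    -- rescale
    have hprod : ∀ k, ∏ i, ‖x i k‖ = (∏ i, nrmDual w (x i)) * ∏ i, y i k := by
      intro k
      rw [← Finset.prod_mul_distrib]
      apply Finset.prod_congr rfl
      intro i _
      show ‖x i k‖ = nrmDual w (x i) * (‖x i k‖ / nrmDual w (x i))
      rw [mul_comm, div_mul_cancel₀ _ (hzero i)]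
    calc ∑ k ∈ F, ‖α k‖ * ∏ i, ‖x i k‖
        = (∏ i, nrmDual w (x i)) * ∑ k ∈ F, ‖α k‖ * ∏ i, y i k := by
          rw [Finset.mul_sum]
          apply sum_congr rfl
          intro k _
          rw [hprod k]; ring
      _ ≤ (∏ i, nrmDual w (x i)) * S := by
          apply mul_le_mul_of_nonneg_left hmain
            (Finset.prod_nonneg (fun i _ => (hMpos i).le))
      _ = S * ∏ i, nrmDual w (x i) := mul_comm _ _

-- phase lemmas
noncomputable def phase (α : ℕ → ℂ) (n : ℕ) (k : ℕ) : ℂ :=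
  if α k = 0 then 1
  else Complex.exp (Complex.log ((starRingEnd ℂ) (α k) / (‖α k‖ : ℂ)) / (n : ℂ))

lemma phase_norm (α : ℕ → ℂ) (n : ℕ) (k : ℕ) : ‖phase α n k‖ = 1 := by
  unfold phase
  split_ifs with h
  · simp
  · rw [Complex.norm_exp]
    have hre : (Complex.log ((starRingEnd ℂ) (α k) / (‖α k‖ : ℂ)) / (n : ℂ)).re = 0 := by
      have habs : ‖(starRingEnd ℂ) (α k) / (‖α k‖ : ℂ)‖ = 1 := by
        rw [norm_div, Complex.norm_conj, Complex.norm_real, norm_norm,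
          div_self (norm_ne_zero_iff.mpr h)]
      have hlogre : (Complex.log ((starRingEnd ℂ) (α k) / (‖α k‖ : ℂ))).re = 0 := by
        rw [Complex.log_re, habs, Real.log_one]
      rw [div_eq_mul_inv]
      have h2 : ((n : ℂ))⁻¹ = (((n : ℝ))⁻¹ : ℝ) := by push_cast; ring
      rw [h2, Complex.mul_re, hlogre]
      simp
    rw [hre, Real.exp_zero]

lemma phase_pow {α : ℕ → ℂ} {n : ℕ} (hn : 0 < n) (k : ℕ) :
    α k * (phase α n k) ^ n = (‖α k‖ : ℂ) := by
  unfold phase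
  split_ifs with h
  · simp [h]
  · rw [← Complex.exp_nat_mul]
    have hne : ((n : ℂ)) ≠ 0 := by
      simp [Nat.cast_ne_zero]; omega
    rw [mul_div_cancel₀ _ hne]
    rw [Complex.exp_log]
    · have habs : ((‖α k‖ : ℝ) : ℂ) ≠ 0 := by
        simp [h]
      field_simp
      rw [Complex.mul_conj]
      rw [Complex.normSq_eq_norm_sq]
      push_cast
      ring
    · exact div_ne_zero ((map_ne_zero (starRingEnd ℂ)).mpr h)
        (Complex.ofReal_ne_zero.mpr (norm_ne_zero_iff.mpr h))

lemma necess {w : ℕ → ℝ} (hw : ∀ k, 0 < w k) (hwa : Antitone w)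
    {α : ℕ → ℂ} {A : ℝ} (hA : ∀ k, ‖α k‖ ≤ A) {n : ℕ} (hn : 0 < n)
    {C : ℝ} (hC0 : 0 ≤ C)
    (hC : ∀ x : Fin n → ℕ → ℂ, (∀ i, memDual w (x i)) →
        ‖∑' k, α k * ∏ i, x i k‖ ≤ C * ∏ i, nrmDual w (x i))
    (N : ℕ) : ∑ m ∈ range N, dRear α m * w m ^ n ≤ C := by
  classical
  have hw0 : ∀ k, 0 ≤ w k := fun k => (hw k).le
  apply le_of_forall_pos_le_add
  intro δ hδ
  set ε : ℝ := δ / (∑ m ∈ range N, w m ^ n + 1) with hε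
  have hwsum : 0 ≤ ∑ m ∈ range N, w m ^ n :=
    Finset.sum_nonneg fun m _ => pow_nonneg (hw0 m) n
  have hεpos : 0 < ε := div_pos hδ (by linarith)
  -- greedy choice
  have pick : ∀ J : Finset ℕ, ∃ k, k ∉ J ∧ dRear α J.card - ε < ‖α k‖ :=
    fun J => dRear_greedy J le_rfl hεpos
  choose f hf1 hf2 using pick
  set T : ℕ → Finset ℕ := fun m => Nat.rec ∅ (fun _ Jm => insert (f Jm) Jm) m with hT
  have hTsucc : ∀ m, T (m + 1) = insert (f (T m)) (T m) := fun m => rfl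
  set j : ℕ → ℕ := fun m => f (T m) with hj
  have hTcard : ∀ m, (T m).card = m := by
    intro m
    induction m with
    | zero => simp [hT]
    | succ m ih => rw [hTsucc, Finset.card_insert_of_notMem (hf1 (T m)), ih]
  have hjval : ∀ m, dRear α m - ε < ‖α (j m)‖ := by
    intro m
    have := hf2 (T m)
    rwa [hTcard] at this
  have hmem : ∀ l m, l < m → j l ∈ T m := by
    intro l m hlm
    induction m with
    | zero => omega
    | succ m ih =>
      rw [hTsucc]
      rcases Nat.lt_succ_iff_lt_or_eq.mp hlm with h | h
      · exact Finset.mem_insert_of_mem (ih h)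
      · subst h; exact Finset.mem_insert_self _ _
  have hjinj : ∀ l m, l < m → j l ≠ j m := by
    intro l m hlm heq
    have h1 := hmem l m hlm
    rw [heq] at h1
    exact hf1 (T m) h1
  have hjinj' : ∀ a b, j a = j b → a = b := by
    intro a b hab
    rcases lt_trichotomy a b with h | h | h
    · exact absurd hab (hjinj a b h)
    · exact h
    · exact absurd hab.symm (hjinj b a h)
  -- the test vector
  set θ : ℕ → ℂ := phase α n with hθ
  set x1 : ℕ → ℂ := fun k =>
    if h : ∃ m, m < N ∧ j m = k then (w (Nat.find h) : ℂ) * θ k else 0 with hx1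
  set TN : Finset ℕ := Finset.image j (range N) with hTN
  have hx1j : ∀ m, m < N → x1 (j m) = (w m : ℂ) * θ (j m) := by
    intro m hm
    have hex : ∃ m', m' < N ∧ j m' = j m := ⟨m, hm, rfl⟩
    have hspec := Nat.find_spec hex
    have : Nat.find hex = m := hjinj' _ _ hspec.2
    simp only [hx1, dif_pos hex, this]
  have hx1norm : ∀ m, m < N → ‖x1 (j m)‖ = w m := by
    intro m hm
    rw [hx1j m hm, norm_mul, phase_norm, mul_one, Complex.norm_real,
      Real.norm_of_nonneg (hw0 m)]
  have hx1z : ∀ k, k ∉ TN → x1 k = 0 := by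
    intro k hk
    have : ¬ ∃ m, m < N ∧ j m = k := by
      rintro ⟨m, hm, rfl⟩
      exact hk (Finset.mem_image.mpr ⟨m, mem_range.mpr hm, rfl⟩)
    simp only [hx1, dif_neg this]
  -- norm sums
  have hxsum : ∀ J' : Finset ℕ, ∑ k ∈ J', ‖x1 k‖ ≤ ∑ m ∈ range J'.card, w m := by
    intro J'
    have hsub : J' ∩ TN ⊆ J' := Finset.inter_subset_left
    have heq1 : ∑ k ∈ J', ‖x1 k‖ = ∑ k ∈ J' ∩ TN, ‖x1 k‖ := by
      symm
      apply Finset.sum_subset hsub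
      intro k hk hk2
      rw [hx1z k (fun hkTN => hk2 (Finset.mem_inter.mpr ⟨hk, hkTN⟩)), norm_zero]
    set R : Finset ℕ := (range N).filter (fun m => j m ∈ J') with hR
    have himgR : Finset.image j R = J' ∩ TN := by
      ext k
      simp only [Finset.mem_image, Finset.mem_inter, hR, Finset.mem_filter, mem_range, hTN]
      constructor
      · rintro ⟨m, ⟨hm, hmJ⟩, rfl⟩
        exact ⟨hmJ, ⟨m, hm, rfl⟩⟩
      · rintro ⟨hkJ, hkT⟩
        obtain ⟨m, hm, rfl⟩ := hkT
        exact ⟨m, ⟨hm, hkJ⟩, rfl⟩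
    have hRinj : ∀ a ∈ R, ∀ b ∈ R, j a = j b → a = b := fun a _ b _ => hjinj' a b
    have heq2 : ∑ k ∈ J' ∩ TN, ‖x1 k‖ = ∑ m ∈ R, w m := by
      rw [← himgR, Finset.sum_image hRinj]
      apply Finset.sum_congr rfl
      intro m hm
      have : m < N := mem_range.mp (Finset.mem_filter.mp hm).1
      exact hx1norm m this
    have hcardR : R.card ≤ J'.card := by
      have := Finset.card_image_of_injOn (s := R) (f := j)
        (fun a ha b hb => hjinj' a b)
      rw [himgR] at this
      rw [← this]
      exact Finset.card_le_card hsub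
    calc ∑ k ∈ J', ‖x1 k‖ = ∑ m ∈ R, w m := by rw [heq1, heq2]
      _ ≤ ∑ m ∈ range R.card, w m := sum_antitone_le hwa hw0 R
      _ ≤ ∑ m ∈ range J'.card, w m := by
          apply Finset.sum_le_sum_of_subset_of_nonneg
            (Finset.range_subset_range.mpr hcardR)
          intro m _ _
          exact hw0 m
  have hmd : memDual w x1 := memDual_of_le hw hxsum
  have hnrm1 : nrmDual w x1 ≤ 1 := nrmDual_le_one hw hxsum
  have hnrm0 : 0 ≤ nrmDual w x1 := nrmDual_nonneg hmd
  -- evaluate the form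
  set xx : Fin n → ℕ → ℂ := fun _ => x1 with hxx
  have hform := hC xx (fun i => hmd)
  have hprodle : ∏ i : Fin n, nrmDual w (xx i) ≤ 1 := by
    apply Finset.prod_le_one (fun i _ => hnrm0) (fun i _ => hnrm1)
  have hconst : ∀ k, (∏ i : Fin n, xx i k) = (x1 k) ^ n := by
    intro k
    rw [hxx]
    rw [Finset.prod_const, Finset.card_univ, Fintype.card_fin]
  have hzero' : ∀ k ∉ TN, α k * ∏ i : Fin n, xx i k = 0 := by
    intro k hk
    rw [hconst, hx1z k hk, zero_pow hn.ne', mul_zero]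
  have htsum : ∑' k, α k * ∏ i : Fin n, xx i k
      = ∑ k ∈ TN, α k * (x1 k) ^ n := by
    rw [tsum_eq_sum (fun k hk => hzero' k hk)]
    exact Finset.sum_congr rfl (fun k _ => by rw [hconst])
  have hRinj2 : ∀ a ∈ range N, ∀ b ∈ range N, j a = j b → a = b :=
    fun a _ b _ => hjinj' a b
  have heval : ∑ k ∈ TN, α k * (x1 k) ^ n
      = ((∑ m ∈ range N, w m ^ n * ‖α (j m)‖ : ℝ) : ℂ) := by
    rw [hTN, Finset.sum_image hRinj2]
    push_cast
    apply Finset.sum_congr rfl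
    intro m hm
    have hmN := mem_range.mp hm
    rw [hx1j m hmN, mul_pow, ← mul_assoc, mul_comm (α (j m)), mul_assoc]
    rw [phase_pow hn (j m)]
  have hnorm : ‖∑' k, α k * ∏ i : Fin n, xx i k‖
      = ∑ m ∈ range N, w m ^ n * ‖α (j m)‖ := by
    rw [htsum, heval, Complex.norm_real, Real.norm_of_nonneg]
    apply Finset.sum_nonneg
    intro m _
    exact mul_nonneg (pow_nonneg (hw0 m) n) (norm_nonneg _)
  have hbound : ∑ m ∈ range N, w m ^ n * ‖α (j m)‖ ≤ C := by
    rw [← hnorm]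
    calc ‖∑' k, α k * ∏ i : Fin n, xx i k‖ ≤ C * ∏ i : Fin n, nrmDual w (xx i) := hform
      _ ≤ C * 1 := by
          apply mul_le_mul_of_nonneg_left hprodle hC0
      _ = C := mul_one C
  have hlow : ∑ m ∈ range N, w m ^ n * (dRear α m - ε)
      ≤ ∑ m ∈ range N, w m ^ n * ‖α (j m)‖ := by
    apply Finset.sum_le_sum
    intro m _
    exact mul_le_mul_of_nonneg_left (hjval m).le (pow_nonneg (hw0 m) n)
  have hexp : ∑ m ∈ range N, w m ^ n * (dRear α m - ε)
      = ∑ m ∈ range N, dRear α m * w m ^ n - ε * ∑ m ∈ range N, w m ^ n := by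
    rw [Finset.mul_sum, ← Finset.sum_sub_distrib]
    apply Finset.sum_congr rfl
    intro m _
    ring
  have hεbound : ε * ∑ m ∈ range N, w m ^ n ≤ δ := by
    rw [hε]
    rw [div_mul_eq_mul_div, div_le_iff₀ (by linarith)]
    nlinarith
  linarith [hlow, hbound, hexp ▸ hlow]

theorem stmt11 (w : ℕ → ℝ) (hw : ∀ k, 0 < w k) (hwa : Antitone w) (hw1 : w 0 = 1)
    (hw0 : Filter.Tendsto w Filter.atTop (nhds 0)) (hwns : ¬ Summable w)
    (n : ℕ) (hn : 0 < n) (α : ℕ → ℂ) (hα : ∃ A : ℝ, ∀ k, ‖α k‖ ≤ A) :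
    ((∃ C : ℝ, 0 < C ∧ ∀ x : Fin n → ℕ → ℂ, (∀ i, memDual w (x i)) →
        Summable (fun k => ‖α k‖ * ∏ i, ‖x i k‖) ∧
        ‖∑' k, α k * ∏ i, x i k‖ ≤ C * ∏ i, nrmDual w (x i)) ↔
      Summable (fun k => dRear α k * w k ^ n))
    ∧ (Summable (fun k => dRear α k * w k ^ n) →
        sInf {C : ℝ | 0 ≤ C ∧ ∀ x : Fin n → ℕ → ℂ, (∀ i, memDual w (x i)) →
            ‖∑' k, α k * ∏ i, x i k‖ ≤ C * ∏ i, nrmDual w (x i)}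
          = ∑' k, dRear α k * w k ^ n) := by
  obtain ⟨A0, hA0⟩ := hα
  have hA : ∀ k, ‖α k‖ ≤ max A0 0 := fun k => (hA0 k).trans (le_max_left _ _)
  have hwpos : ∀ k, (0:ℝ) ≤ w k := fun k => (hw k).le
  have hterm0 : ∀ k, 0 ≤ dRear α k * w k ^ n := fun k =>
    mul_nonneg (dRear_nonneg hA k) (pow_nonneg (hwpos k) n)
  -- the main estimate, given summability
  have main : Summable (fun k => dRear α k * w k ^ n) →
      ∀ x : Fin n → ℕ → ℂ, (∀ i, memDual w (x i)) →
        Summable (fun k => ‖α k‖ * ∏ i, ‖x i k‖) ∧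
        ‖∑' k, α k * ∏ i, x i k‖
          ≤ (∑' k, dRear α k * w k ^ n) * ∏ i, nrmDual w (x i) := by
    intro hS x hx
    have hpt : ∀ k, 0 ≤ ‖α k‖ * ∏ i, ‖x i k‖ := fun k =>
      mul_nonneg (norm_nonneg _) (Finset.prod_nonneg (fun i _ => norm_nonneg _))
    have hsum : Summable (fun k => ‖α k‖ * ∏ i, ‖x i k‖) :=
      summable_of_sum_le hpt (fun F => core_bound hw hwa hA hS x hx F)
    refine ⟨hsum, ?_⟩
    have hnormeq : ∀ k, ‖α k * ∏ i, x i k‖ = ‖α k‖ * ∏ i, ‖x i k‖ := by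
      intro k
      rw [norm_mul]
      congr 1
      exact norm_prod _ _
    have hsum' : Summable (fun k => ‖α k * ∏ i, x i k‖) := by
      simpa only [hnormeq] using hsum
    calc ‖∑' k, α k * ∏ i, x i k‖ ≤ ∑' k, ‖α k * ∏ i, x i k‖ :=
          norm_tsum_le_tsum_norm hsum'
      _ = ∑' k, ‖α k‖ * ∏ i, ‖x i k‖ := by
          apply tsum_congr hnormeq
      _ ≤ (∑' k, dRear α k * w k ^ n) * ∏ i, nrmDual w (x i) :=
          Summable.tsum_le_of_sum_le hsum (fun F => core_bound hw hwa hA hS x hx F)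
  constructor
  · constructor
    · rintro ⟨C, hCpos, hCb⟩
      apply summable_of_sum_range_le hterm0
      intro N
      exact necess hw hwa hA hn hCpos.le (fun x hx => (hCb x hx).2) N
    · intro hS
      have hS0 : 0 ≤ ∑' k, dRear α k * w k ^ n := tsum_nonneg hterm0
      refine ⟨(∑' k, dRear α k * w k ^ n) + 1, by linarith, ?_⟩
      intro x hx
      obtain ⟨h1, h2⟩ := main hS x hx
      refine ⟨h1, h2.trans ?_⟩
      apply mul_le_mul_of_nonneg_right (by linarith)
        (Finset.prod_nonneg (fun i _ => nrmDual_nonneg (hx i)))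
  · intro hS
    set S := ∑' k, dRear α k * w k ^ n with hSdef
    have hS0 : 0 ≤ S := tsum_nonneg hterm0
    have hSin : S ∈ {C : ℝ | 0 ≤ C ∧ ∀ x : Fin n → ℕ → ℂ, (∀ i, memDual w (x i)) →
        ‖∑' k, α k * ∏ i, x i k‖ ≤ C * ∏ i, nrmDual w (x i)} :=
      ⟨hS0, fun x hx => (main hS x hx).2⟩
    apply le_antisymm
    · exact csInf_le ⟨0, fun C hC => hC.1⟩ hSin
    · apply le_csInf ⟨S, hSin⟩
      rintro C ⟨hC0, hCb⟩
      apply Real.tsum_le_of_sum_range_le hterm0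
      intro N
      exact necess hw hwa hA hn hC0 hCb N
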